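/- Let D > 0, R > 0, let v : [0, R] → ℝ be continuous with ⟨v⟩ = 0, let a ∈ ℝ, and define η(r) = (1/D) ∫₀ʳ (1/z) ∫₀ᶻ v(s) s ds dz. Then w := a·(η − ⟨η⟩) is the unique function, continuous on [0, R] and C² on (0, R] with bounded derivative, satisfying D(w'' + w'/r) = a·v(r) on (0, R), w'(R) = 0, and ⟨w⟩ = 0. (This identifies the first-order correction W₁ = ∂_x⟨c⟩·(η − ⟨η⟩) of the center-manifold expansion.) -/

import Mathlib

open Set MeasureTheory intervalIntegral Filter Topology

section Aux

lemma primitive_hasDerivAt {R : ℝ} {f : ℝ → ℝ} (hf : ContinuousOn f (Icc 0 R)) {r : ℝ}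
    (hr : r ∈ Ioo 0 R) :
    HasDerivAt (fun x => ∫ t in (0:ℝ)..x, f t) (f r) r := by
  have hmem : Icc (0:ℝ) R ∈ 𝓝 r := Icc_mem_nhds hr.1 hr.2
  have hint : IntervalIntegrable f volume 0 r :=
    (hf.mono (by rw [uIcc_of_le hr.1.le]; exact Icc_subset_Icc le_rfl hr.2.le)).intervalIntegrable
  exact integral_hasDerivAt_right hint
    ⟨Icc 0 R, hmem, (hf.aestronglyMeasurable measurableSet_Icc)⟩
    (hf.continuousAt hmem)

lemma primitive_hasDerivWithinAt {R : ℝ} (hR : 0 < R) {f : ℝ → ℝ}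
    (hf : ContinuousOn f (Icc 0 R)) {r : ℝ} (hr : r ∈ Icc 0 R) :
    HasDerivWithinAt (fun x => ∫ t in (0:ℝ)..x, f t) (f r) (Icc 0 R) r := by
  have hint : IntervalIntegrable f volume 0 r :=
    (hf.mono (by rw [uIcc_of_le hr.1]; exact Icc_subset_Icc le_rfl hr.2)).intervalIntegrable
  have hms : AEStronglyMeasurable f (volume.restrict (Icc 0 R)) :=
    hf.aestronglyMeasurable measurableSet_Icc
  rcases eq_or_lt_of_le hr.1 with h0 | h0
  · subst h0
    have : HasDerivWithinAt (fun x => ∫ t in (0:ℝ)..x, f t) (f 0) (Ici 0) 0 :=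
      integral_hasDerivWithinAt_right (t := Ioi (0:ℝ)) hint
        ⟨Icc 0 R, Icc_mem_nhdsGT_of_mem ⟨le_rfl, hR⟩, hms⟩
        ((hf _ hr).mono_of_mem_nhdsWithin (Icc_mem_nhdsGT_of_mem ⟨le_rfl, hR⟩))
    exact this.mono Icc_subset_Ici_self
  rcases eq_or_lt_of_le hr.2 with hRr | hRr
  · subst hRr
    have : HasDerivWithinAt (fun x => ∫ t in (0:ℝ)..x, f t) (f r) (Iic r) r :=
      integral_hasDerivWithinAt_right (t := Iic r) hint
        ⟨Icc 0 r, Icc_mem_nhdsLE_of_mem ⟨h0, le_rfl⟩, hms⟩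
        ((hf _ hr).mono_of_mem_nhdsWithin (Icc_mem_nhdsLE_of_mem ⟨h0, le_rfl⟩))
    exact this.mono Icc_subset_Iic_self
  · exact (primitive_hasDerivAt hf ⟨h0, hRr⟩).hasDerivWithinAt

lemma primitive_continuousOn {R : ℝ} (hR : 0 < R) {f : ℝ → ℝ}
    (hf : ContinuousOn f (Icc 0 R)) :
    ContinuousOn (fun x => ∫ t in (0:ℝ)..x, f t) (Icc 0 R) := by
  have h := intervalIntegral.continuousOn_primitive_interval (a := (0:ℝ)) (b := R)
    (μ := volume) (f := f) ?_
  · rwa [uIcc_of_le hR.le] at h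
  · rw [uIcc_of_le hR.le]; exact hf.integrableOn_Icc

/-- The inner primitive `F(r) = ∫₀ʳ v s s ds`. -/
noncomputable def Fv (v : ℝ → ℝ) : ℝ → ℝ := fun r => ∫ s in (0:ℝ)..r, v s * s

/-- `g(z) = F(z)/z`. -/
noncomputable def gv (v : ℝ → ℝ) : ℝ → ℝ := fun z => (1 / z) * Fv v z

variable {R : ℝ} {v : ℝ → ℝ}

lemma cont_vmul (hv : ContinuousOn v (Icc 0 R)) :
    ContinuousOn (fun s => v s * s) (Icc 0 R) := hv.mul continuous_id.continuousOn

lemma Fv_cont (hR : 0 < R) (hv : ContinuousOn v (Icc 0 R)) :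
    ContinuousOn (Fv v) (Icc 0 R) := primitive_continuousOn hR (cont_vmul hv)

lemma Fv_hasDerivWithinAt (hR : 0 < R) (hv : ContinuousOn v (Icc 0 R)) {r : ℝ}
    (hr : r ∈ Icc 0 R) : HasDerivWithinAt (Fv v) (v r * r) (Icc 0 R) r :=
  primitive_hasDerivWithinAt hR (cont_vmul hv) hr

lemma Fv_hasDerivAt (hv : ContinuousOn v (Icc 0 R)) {r : ℝ}
    (hr : r ∈ Ioo 0 R) : HasDerivAt (Fv v) (v r * r) r :=
  primitive_hasDerivAt (cont_vmul hv) hr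

lemma Fv_zero : Fv v 0 = 0 := intervalIntegral.integral_same

lemma gv_cont (hR : 0 < R) (hv : ContinuousOn v (Icc 0 R)) :
    ContinuousOn (gv v) (Icc 0 R) := by
  obtain ⟨M, hM⟩ := isCompact_Icc.exists_bound_of_continuousOn hv
  have hM0 : 0 ≤ M := le_trans (norm_nonneg (v 0)) (hM 0 ⟨le_rfl, hR.le⟩)
  have hFb : ∀ z ∈ Icc (0:ℝ) R, ‖Fv v z‖ ≤ M * z * z := by
    intro z hz
    have h1 : ∀ x ∈ Set.uIoc (0:ℝ) z, ‖v x * x‖ ≤ M * z := by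
      intro x hx
      rw [uIoc_of_le hz.1] at hx
      have hx1 : x ∈ Icc (0:ℝ) R := ⟨hx.1.le, hx.2.trans hz.2⟩
      calc ‖v x * x‖ = ‖v x‖ * |x| := by rw [norm_mul]; rfl
        _ ≤ M * z := by
            apply mul_le_mul (hM x hx1) _ (abs_nonneg x) hM0
            rw [abs_of_nonneg hx.1.le]; exact hx.2
    calc ‖Fv v z‖ ≤ M * z * |z - 0| :=
          intervalIntegral.norm_integral_le_of_norm_le_const h1
      _ = M * z * z := by rw [sub_zero, abs_of_nonneg hz.1]
  intro z hz
  rcases eq_or_lt_of_le hz.1 with h0 | h0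
  · subst h0
    have hgz : gv v 0 = 0 := by simp [gv, Fv]
    unfold ContinuousWithinAt
    rw [hgz]
    apply squeeze_zero_norm' (a := fun z => M * z)
    · filter_upwards [self_mem_nhdsWithin] with z hz'
      rcases eq_or_lt_of_le hz'.1 with h0' | h0'
      · rw [← h0']; simp [gv, Fv]
      · have : ‖gv v z‖ = (1/z) * ‖Fv v z‖ := by
          rw [gv, norm_mul, Real.norm_eq_abs (1/z),
            abs_of_pos (show (0:ℝ) < 1/z by positivity)]
        rw [this]
        calc (1/z) * ‖Fv v z‖ ≤ (1/z) * (M * z * z) := by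
              exact mul_le_mul_of_nonneg_left (hFb z hz') (by positivity)
          _ = M * z := by field_simp
    · have : Tendsto (fun z : ℝ => M * z) (𝓝 0) (𝓝 (M * 0)) :=
        (continuous_const.mul continuous_id).tendsto 0
      rw [mul_zero] at this
      exact this.mono_left nhdsWithin_le_nhds
  · have h1 : ContinuousWithinAt (fun z : ℝ => 1 / z) (Icc 0 R) z :=
      (continuousAt_const.div continuousAt_id (ne_of_gt h0)).continuousWithinAt
    exact h1.mul ((Fv_cont hR hv) z hz)

lemma gv_hasDerivWithinAt (hR : 0 < R) (hv : ContinuousOn v (Icc 0 R)) {r : ℝ}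
    (hr : r ∈ Ioc 0 R) :
    HasDerivWithinAt (gv v) (v r - Fv v r / r ^ 2) (Icc 0 R) r := by
  have hr0 : r ≠ 0 := ne_of_gt hr.1
  have h1 : HasDerivWithinAt (fun z : ℝ => 1 / z) (-(r ^ 2)⁻¹) (Icc 0 R) r := by
    simpa only [one_div] using (hasDerivAt_inv hr0).hasDerivWithinAt
  have h2 := h1.mul (Fv_hasDerivWithinAt hR hv ⟨hr.1.le, hr.2⟩)
  have heq : -(r ^ 2)⁻¹ * Fv v r + 1 / r * (v r * r) = v r - Fv v r / r ^ 2 := by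
    field_simp
    ring
  rw [heq] at h2
  exact h2

end Aux

/-- The radial average `⟨f⟩ = (2/R²) ∫₀ᴿ f(r) r dr`. -/
noncomputable def radAvg (R : ℝ) (f : ℝ → ℝ) : ℝ :=
  (2 / R ^ 2) * ∫ r in (0:ℝ)..R, f r * r

/-- A function `u` solves the first-order cell problem with data `a·v`: it is continuous
on `[0,R]`, C² on `(0,R]` with bounded derivative, satisfies `D (u'' + u'/r) = a v(r)` on
`(0,R)` (derivatives within `[0,R]`), the Neumann condition `u'(R) = 0`, and `⟨u⟩ = 0`. -/
def IsCellSolution (D R a : ℝ) (v u : ℝ → ℝ) : Prop :=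
  ContinuousOn u (Set.Icc 0 R) ∧
  ContDiffOn ℝ 2 u (Set.Ioc 0 R) ∧
  (∃ M, ∀ r ∈ Set.Ioo 0 R, |derivWithin u (Set.Icc 0 R) r| ≤ M) ∧
  (∀ r ∈ Set.Ioo 0 R,
    D * (derivWithin (derivWithin u (Set.Icc 0 R)) (Set.Icc 0 R) r
      + derivWithin u (Set.Icc 0 R) r / r) = a * v r) ∧
  derivWithin u (Set.Icc 0 R) R = 0 ∧
  radAvg R u = 0

/-- Let `D > 0`, `R > 0`, `v` continuous on `[0,R]` with `⟨v⟩ = 0`, `a ∈ ℝ`,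
and `η(r) = (1/D) ∫₀ʳ (1/z) ∫₀ᶻ v(s) s ds dz`. Then `w := a (η - ⟨η⟩)` is the unique
solution of the cell problem: it satisfies the problem, and any solution coincides with it
on `[0,R]`. (This identifies `W₁ = ∂ₓ⟨c⟩ (η - ⟨η⟩)`.) -/
theorem cell_problem_unique_solution
    (D R a : ℝ) (hD : 0 < D) (hR : 0 < R)
    (v : ℝ → ℝ) (hv : ContinuousOn v (Set.Icc 0 R))
    (havg : radAvg R v = 0)
    (η : ℝ → ℝ)
    (hη : η = fun r => (1 / D) * ∫ z in (0:ℝ)..r, (1 / z) * ∫ s in (0:ℝ)..z, v s * s)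
    (w : ℝ → ℝ) (hw : w = fun r => a * (η r - radAvg R η)) :
    IsCellSolution D R a v w ∧
    ∀ u : ℝ → ℝ, IsCellSolution D R a v u → Set.EqOn u w (Set.Icc 0 R) := by
  have hD0 : D ≠ 0 := ne_of_gt hD
  have hR0 : R ≠ 0 := ne_of_gt hR
  have hη' : η = fun r => (1 / D) * ∫ z in (0:ℝ)..r, gv v z := hη
  have hgc : ContinuousOn (gv v) (Icc 0 R) := gv_cont hR hv
  have hηc : ContinuousOn η (Icc 0 R) := by
    rw [hη']; exact continuousOn_const.mul (primitive_continuousOn hR hgc)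
  have hηd : ∀ r ∈ Icc (0:ℝ) R, HasDerivWithinAt η ((1 / D) * gv v r) (Icc 0 R) r := by
    rw [hη']; intro r hr
    exact (primitive_hasDerivWithinAt hR hgc hr).const_mul _
  set c : ℝ := radAvg R η with hc
  have hwc : ContinuousOn w (Icc 0 R) := by
    rw [hw]; exact continuousOn_const.mul (hηc.sub continuousOn_const)
  have hwd : ∀ r ∈ Icc (0:ℝ) R, HasDerivWithinAt w ((a / D) * gv v r) (Icc 0 R) r := by
    intro r hr
    have h1 := ((hηd r hr).sub_const c).const_mul a
    have : a * ((1 / D) * gv v r) = (a / D) * gv v r := by ring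
    rw [this] at h1
    rw [hw]
    exact h1
  have hwdW : ∀ r ∈ Icc (0:ℝ) R, derivWithin w (Icc 0 R) r = (a / D) * gv v r :=
    fun r hr => (hwd r hr).derivWithin (uniqueDiffOn_Icc hR r hr)
  -- F(R) = 0
  have hFR : Fv v R = 0 := by
    have h1 : (2 / R ^ 2) * Fv v R = 0 := havg
    have h2 : (2 / R ^ 2 : ℝ) ≠ 0 := by positivity
    exact (mul_eq_zero.mp h1).resolve_left h2
  -- the PDE for w
  have hpde : ∀ r ∈ Ioo (0:ℝ) R,
      D * (derivWithin (derivWithin w (Icc 0 R)) (Icc 0 R) r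
        + derivWithin w (Icc 0 R) r / r) = a * v r := by
    intro r hr
    have hr0 : r ≠ 0 := ne_of_gt hr.1
    have hrI : r ∈ Icc (0:ℝ) R := ⟨hr.1.le, hr.2.le⟩
    have hcongr : derivWithin (derivWithin w (Icc 0 R)) (Icc 0 R) r
        = derivWithin (fun z => (a / D) * gv v z) (Icc 0 R) r :=
      derivWithin_congr (fun x hx => hwdW x hx) (hwdW r hrI)
    have h2 : derivWithin (fun z => (a / D) * gv v z) (Icc 0 R) r
        = (a / D) * (v r - Fv v r / r ^ 2) :=
      ((gv_hasDerivWithinAt hR hv ⟨hr.1, hr.2.le⟩).const_mul (a / D)).derivWithin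
        (uniqueDiffOn_Icc hR r hrI)
    rw [hcongr, h2, hwdW r hrI, gv]
    field_simp
    ring
  -- Neumann
  have hneu : derivWithin w (Icc 0 R) R = 0 := by
    rw [hwdW R ⟨hR.le, le_rfl⟩, gv, hFR]
    ring
  -- zero average
  have hηint : IntervalIntegrable (fun r => η r * r) volume 0 R := by
    apply ContinuousOn.intervalIntegrable
    rw [uIcc_of_le hR.le]
    exact hηc.mul continuous_id.continuousOn
  have havgw : radAvg R w = 0 := by
    rw [radAvg, hw]
    have heq : (fun r => (a * (η r - c)) * r) = fun r => a * (η r * r) - (a * c) * r := by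
      funext r; ring
    rw [show (∫ r in (0:ℝ)..R, (fun r => a * (η r - c)) r * r)
        = ∫ r in (0:ℝ)..R, (a * (η r * r) - (a * c) * r) by
      apply intervalIntegral.integral_congr; intro x _; simp only []; ring]
    rw [intervalIntegral.integral_sub (hηint.const_mul a)
      (intervalIntegrable_id.const_mul (a * c)),
      intervalIntegral.integral_const_mul, intervalIntegral.integral_const_mul,
      integral_id]
    have hcval : c = (2 / R ^ 2) * ∫ r in (0:ℝ)..R, η r * r := rfl
    rw [hcval]
    field_simp
    ring
  -- bounded derivative
  have hbd : ∃ M, ∀ r ∈ Ioo (0:ℝ) R, |derivWithin w (Icc 0 R) r| ≤ M := by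
    obtain ⟨K, hK⟩ := isCompact_Icc.exists_bound_of_continuousOn
      (continuousOn_const.mul hgc : ContinuousOn (fun r => (a / D) * gv v r) (Icc 0 R))
    refine ⟨K, fun r hr => ?_⟩
    rw [hwdW r ⟨hr.1.le, hr.2.le⟩, ← Real.norm_eq_abs]
    exact hK r ⟨hr.1.le, hr.2.le⟩
  -- C² on Ioc
  have hsub : Ioc (0:ℝ) R ⊆ Icc 0 R := Ioc_subset_Icc_self
  have hc2 : ContDiffOn ℝ 2 w (Ioc 0 R) := by
    have hwdI : ∀ r ∈ Ioc (0:ℝ) R, HasDerivWithinAt w ((a / D) * gv v r) (Ioc 0 R) r :=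
      fun r hr => (hwd r (hsub hr)).mono hsub
    have hdiff : DifferentiableOn ℝ w (Ioc 0 R) :=
      fun r hr => (hwdI r hr).differentiableWithinAt
    have hdW : ∀ r ∈ Ioc (0:ℝ) R, derivWithin w (Ioc 0 R) r = (a / D) * gv v r :=
      fun r hr => (hwdI r hr).derivWithin (uniqueDiffOn_Ioc 0 R r hr)
    have hFc1 : ContDiffOn ℝ 1 (Fv v) (Ioc 0 R) := by
      rw [show (1 : WithTop ℕ∞) = 0 + 1 by norm_num,
        contDiffOn_succ_iff_derivWithin (uniqueDiffOn_Ioc 0 R)]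
      refine ⟨fun r hr => ((Fv_hasDerivWithinAt hR hv (hsub hr)).mono
        hsub).differentiableWithinAt, by simp, ?_⟩
      rw [contDiffOn_zero]
      apply ContinuousOn.congr ((hv.mono hsub).mul continuous_id.continuousOn)
      intro r hr
      exact ((Fv_hasDerivWithinAt hR hv (hsub hr)).mono hsub).derivWithin
        (uniqueDiffOn_Ioc 0 R r hr)
    have hgc1 : ContDiffOn ℝ 1 (gv v) (Ioc 0 R) := by
      have h1 : ContDiffOn ℝ 1 (fun z : ℝ => 1 / z) (Ioc 0 R) :=
        contDiffOn_const.div contDiffOn_id (fun z hz => ne_of_gt hz.1)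
      exact h1.mul hFc1
    rw [show (2 : WithTop ℕ∞) = 1 + 1 by norm_num,
      contDiffOn_succ_iff_derivWithin (uniqueDiffOn_Ioc 0 R)]
    exact ⟨hdiff, by simp, (contDiffOn_const.mul hgc1).congr hdW⟩
  refine ⟨⟨hwc, hc2, hbd, hpde, hneu, havgw⟩, ?_⟩
  -- ============ UNIQUENESS ============
  rintro u ⟨huc, huc2, ⟨M, hM⟩, hupde, _, huavg⟩
  have hM0 : 0 ≤ M :=
    le_trans (abs_nonneg _) (hM (R/2) ⟨by positivity, by linarith⟩)
  -- basic facts at interior points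
  have hIoo_nhds : ∀ r ∈ Ioo (0:ℝ) R, Ioo (0:ℝ) R ∈ 𝓝 r :=
    fun r hr => isOpen_Ioo.mem_nhds hr
  have huc2' : ContDiffOn ℝ 2 u (Ioo 0 R) := huc2.mono Ioo_subset_Ioc_self
  have hud : ∀ r ∈ Ioo (0:ℝ) R, DifferentiableAt ℝ u r := by
    intro r hr
    exact (huc2'.contDiffAt (hIoo_nhds r hr)).differentiableAt (by norm_num)
  have hder : ContDiffOn ℝ 1 (deriv u) (Ioo 0 R) := by
    have := (contDiffOn_succ_iff_deriv_of_isOpen (n := 1) (f := u) isOpen_Ioo).mp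
      (by rw [show ((1:WithTop ℕ∞) + 1) = 2 by norm_num]; exact huc2')
    exact this.2.2
  have hud2 : ∀ r ∈ Ioo (0:ℝ) R, DifferentiableAt ℝ (deriv u) r := by
    intro r hr
    exact (hder.contDiffAt (hIoo_nhds r hr)).differentiableAt one_ne_zero
  have he1 : ∀ r ∈ Ioo (0:ℝ) R, derivWithin u (Icc 0 R) r = deriv u r :=
    fun r hr => derivWithin_of_mem_nhds (Icc_mem_nhds hr.1 hr.2)
  have he2 : ∀ r ∈ Ioo (0:ℝ) R,
      derivWithin (derivWithin u (Icc 0 R)) (Icc 0 R) r = deriv (deriv u) r := by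
    intro r hr
    rw [derivWithin_of_mem_nhds (Icc_mem_nhds hr.1 hr.2)]
    apply Filter.EventuallyEq.deriv_eq
    filter_upwards [hIoo_nhds r hr] with x hx
    exact he1 x hx
  -- the PDE for u in terms of ordinary derivatives
  have hupde' : ∀ r ∈ Ioo (0:ℝ) R,
      D * (deriv (deriv u) r + deriv u r / r) = a * v r := by
    intro r hr
    have := hupde r hr
    rwa [he1 r hr, he2 r hr] at this
  -- the combination h := D * (r u') - a F is constant on Ioo
  set h : ℝ → ℝ := fun x => D * (x * deriv u x) - a * Fv v x with hh
  have hhd : ∀ r ∈ Ioo (0:ℝ) R, HasDerivAt h 0 r := by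
    intro r hr
    have h1 : HasDerivAt (fun x => x * deriv u x)
        (1 * deriv u r + r * deriv (deriv u) r) r :=
      (hasDerivAt_id r).mul ((hud2 r hr).hasDerivAt)
    have h2 := (h1.const_mul D).sub ((Fv_hasDerivAt hv hr).const_mul a)
    have key := hupde' r hr
    have hr0 : r ≠ 0 := ne_of_gt hr.1
    have key2 : D * (deriv (deriv u) r * r + deriv u r) = a * (v r * r) := by
      field_simp at key
      linarith
    have : D * (1 * deriv u r + r * deriv (deriv u) r) - a * (v r * r) = 0 := by
      linear_combination key2
    rwa [this] at h2
  have hhconst : ∀ x ∈ Ioo (0:ℝ) R, ∀ y ∈ Ioo (0:ℝ) R, h x = h y := by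
    have key : ∀ x ∈ Ioo (0:ℝ) R, ∀ y ∈ Ioo (0:ℝ) R, x ≤ y → h y = h x := by
      intro x hx y hy hxy
      have hIcc : Icc x y ⊆ Ioo 0 R := fun t ht => ⟨lt_of_lt_of_le hx.1 ht.1,
        lt_of_le_of_lt ht.2 hy.2⟩
      have hcont : ContinuousOn h (Icc x y) := fun t ht =>
        ((hhd t (hIcc ht)).differentiableAt.continuousAt).continuousWithinAt
      have hderiv : ∀ t ∈ Ico x y, HasDerivWithinAt h 0 (Ici t) t := fun t ht =>
        (hhd t (hIcc ⟨ht.1, ht.2.le⟩)).hasDerivWithinAt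
      exact constant_of_has_deriv_right_zero hcont hderiv y ⟨hxy, le_rfl⟩
    intro x hx y hy
    rcases le_total x y with hxy | hxy
    · exact (key x hx y hy hxy).symm
    · exact key y hy x hx hxy
  -- h tends to 0 at 0⁺, hence h ≡ 0 on Ioo
  have hne : (𝓝[Ioo (0:ℝ) R] 0).NeBot := by
    apply mem_closure_iff_nhdsWithin_neBot.mp
    rw [closure_Ioo hR0.symm]
    exact ⟨le_rfl, hR.le⟩
  have hhlim : Tendsto h (𝓝[Ioo (0:ℝ) R] 0) (𝓝 0) := by
    have ht1 : Tendsto (fun x => D * (x * deriv u x)) (𝓝[Ioo (0:ℝ) R] 0) (𝓝 0) := by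
      apply squeeze_zero_norm' (a := fun x => D * M * x)
      · filter_upwards [self_mem_nhdsWithin] with x hx
        have hxI : x ∈ Ioo (0:ℝ) R := hx
        have hb : |deriv u x| ≤ M := by
          rw [← he1 x hxI]; exact hM x hxI
        have : ‖D * (x * deriv u x)‖ = D * (x * |deriv u x|) := by
          rw [norm_mul, norm_mul, Real.norm_eq_abs, Real.norm_eq_abs, Real.norm_eq_abs,
            abs_of_pos hD, abs_of_pos hxI.1]
        rw [this]
        calc D * (x * |deriv u x|) ≤ D * (x * M) := by
              apply mul_le_mul_of_nonneg_left _ hD.le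
              exact mul_le_mul_of_nonneg_left hb hxI.1.le
          _ = D * M * x := by ring
      · have : Tendsto (fun x : ℝ => D * M * x) (𝓝 0) (𝓝 (D * M * 0)) :=
          (continuous_const.mul continuous_id).tendsto 0
        rw [mul_zero] at this
        exact this.mono_left nhdsWithin_le_nhds
    have ht2 : Tendsto (fun x => a * Fv v x) (𝓝[Ioo (0:ℝ) R] 0) (𝓝 0) := by
      have hF0 : ContinuousWithinAt (Fv v) (Icc 0 R) 0 := Fv_cont hR hv 0 ⟨le_rfl, hR.le⟩
      have : Tendsto (Fv v) (𝓝[Ioo (0:ℝ) R] 0) (𝓝 (Fv v 0)) :=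
        hF0.mono_left (nhdsWithin_mono 0 Ioo_subset_Icc_self)
      rw [Fv_zero] at this
      simpa using (this.const_mul a)
    have := ht1.sub ht2
    rw [sub_zero] at this
    exact this
  have hh0 : ∀ x ∈ Ioo (0:ℝ) R, h x = 0 := by
    intro x hx
    have hconst : Tendsto h (𝓝[Ioo (0:ℝ) R] 0) (𝓝 (h x)) := by
      apply Tendsto.congr' _ tendsto_const_nhds
      filter_upwards [self_mem_nhdsWithin] with y hy
      exact hhconst x hx y hy
    exact tendsto_nhds_unique hconst hhlim
  -- hence u' = w' on Ioo
  have hderiv_eq : ∀ r ∈ Ioo (0:ℝ) R, deriv u r = (a / D) * gv v r := by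
    intro r hr
    have h1 := hh0 r hr
    rw [hh] at h1
    have hr0 : r ≠ 0 := ne_of_gt hr.1
    have h1' : D * (r * deriv u r) - a * Fv v r = 0 := h1
    have h2 : D * (r * deriv u r) = a * Fv v r := by linarith
    rw [gv]
    field_simp
    linear_combination h2
  have hwderiv : ∀ r ∈ Ioo (0:ℝ) R, deriv w r = (a / D) * gv v r := by
    intro r hr
    exact ((hwd r ⟨hr.1.le, hr.2.le⟩).hasDerivAt (Icc_mem_nhds hr.1 hr.2)).deriv
  -- ψ := u - w is constant on Ioo
  set ψ : ℝ → ℝ := fun x => u x - w x with hψ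
  have hψd : ∀ r ∈ Ioo (0:ℝ) R, HasDerivAt ψ 0 r := by
    intro r hr
    have h1 : HasDerivAt u (deriv u r) r := (hud r hr).hasDerivAt
    have h2 : HasDerivAt w ((a / D) * gv v r) r :=
      (hwd r ⟨hr.1.le, hr.2.le⟩).hasDerivAt (Icc_mem_nhds hr.1 hr.2)
    have h3 := h1.sub h2
    rw [show deriv u r - (a / D) * gv v r = 0 by rw [hderiv_eq r hr]; ring] at h3
    exact h3
  have hψconst : ∀ x ∈ Ioo (0:ℝ) R, ∀ y ∈ Ioo (0:ℝ) R, ψ x = ψ y := by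
    have key : ∀ x ∈ Ioo (0:ℝ) R, ∀ y ∈ Ioo (0:ℝ) R, x ≤ y → ψ y = ψ x := by
      intro x hx y hy hxy
      have hIcc : Icc x y ⊆ Ioo 0 R := fun t ht => ⟨lt_of_lt_of_le hx.1 ht.1,
        lt_of_le_of_lt ht.2 hy.2⟩
      have hcont : ContinuousOn ψ (Icc x y) := fun t ht =>
        ((hψd t (hIcc ht)).differentiableAt.continuousAt).continuousWithinAt
      exact constant_of_has_deriv_right_zero hcont
        (fun t ht => (hψd t (hIcc ⟨ht.1, ht.2.le⟩)).hasDerivWithinAt) y ⟨hxy, le_rfl⟩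
    intro x hx y hy
    rcases le_total x y with hxy | hxy
    · exact (key x hx y hy hxy).symm
    · exact key y hy x hx hxy
  have hR2 : (R/2) ∈ Ioo (0:ℝ) R := ⟨by positivity, by linarith⟩
  set Cψ : ℝ := ψ (R/2) with hCψdef
  have hψcont : ContinuousOn ψ (Icc 0 R) := huc.sub hwc
  have hψval : ∀ x ∈ Icc (0:ℝ) R, ψ x = Cψ := by
    intro x hx
    have hxcl : x ∈ closure (Ioo (0:ℝ) R) := by
      rw [closure_Ioo hR0.symm]; exact hx
    have hne' : (𝓝[Ioo (0:ℝ) R] x).NeBot := mem_closure_iff_nhdsWithin_neBot.mp hxcl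
    have h1 : Tendsto ψ (𝓝[Ioo (0:ℝ) R] x) (𝓝 (ψ x)) :=
      (hψcont x hx).mono_left (nhdsWithin_mono x Ioo_subset_Icc_self)
    have h2 : Tendsto ψ (𝓝[Ioo (0:ℝ) R] x) (𝓝 Cψ) := by
      apply Tendsto.congr' _ tendsto_const_nhds
      filter_upwards [self_mem_nhdsWithin] with y hy
      exact hψconst (R/2) hR2 y hy
    exact tendsto_nhds_unique h1 h2
  -- average forces the constant to vanish
  have hwint : IntervalIntegrable (fun r => w r * r) volume 0 R := by
    apply ContinuousOn.intervalIntegrable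
    rw [uIcc_of_le hR.le]
    exact hwc.mul continuous_id.continuousOn
  have havgu : radAvg R u = radAvg R w + Cψ := by
    rw [radAvg, radAvg]
    have hcg : ∀ x ∈ uIcc (0:ℝ) R, u x * x = w x * x + Cψ * x := by
      intro x hx
      rw [uIcc_of_le hR.le] at hx
      have := hψval x hx
      rw [hψ] at this
      simp only [] at this
      linear_combination x * this
    rw [intervalIntegral.integral_congr hcg,
      intervalIntegral.integral_add hwint (intervalIntegrable_id.const_mul Cψ),
      intervalIntegral.integral_const_mul, integral_id]
    field_simp
    ring
  have hCψ0 : Cψ = 0 := by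
    rw [havgw, huavg] at havgu
    linarith
  intro x hx
  have := hψval x hx
  rw [hψ, hCψ0] at this
  simp only [] at this
  linarith
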